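/- arXiv:2012.04338 — 4 statements merged into one kernel-verified Lean document; each statement's English description precedes it below -/
import Mathlib

section
/- Let S be a positively directed Cu~-semigroup (an ordered commutative monoid satisfying: every increasing sequence has a supremum; for every x there exists p with x + p ≥ 0). If the set S_max of maximal elements of S is nonempty, then S_max is closed under addition. -/
/-- The set of maximal elements of an ordered monoid. -/
def maxSet (S : Type*) [Preorder S] : Set S := {x | ∀ y, x ≤ y → y = x}

/-- In a positively directed `Cu~`-semigroup (every increasing sequence has a supremum and
for every `x` there is `p` with `x + p ≥ 0`), if the set of maximal elements is nonempty
then it is closed under addition. -/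
theorem maxSet_add_closed {S : Type*} [AddCommMonoid S] [PartialOrder S] [IsOrderedAddMonoid S]
    (hO1 : ∀ z : ℕ → S, Monotone z → ∃ s : S, IsLUB (Set.range z) s)
    (hdir : ∀ x : S, ∃ p : S, 0 ≤ x + p)
    (hne : (maxSet S).Nonempty) :
    ∀ y ∈ maxSet S, ∀ z ∈ maxSet S, y + z ∈ maxSet S := by
  intro y hy z hz w hw
  obtain ⟨p, hp⟩ := hdir z
  have h1 : y ≤ w + p := by
    calc y = y + 0 := (add_zero y).symm
    _ ≤ y + (z + p) := add_le_add_right hp y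
    _ = (y + z) + p := (add_assoc y z p).symm
    _ ≤ w + p := add_le_add_left hw p
  have h2 : w + p = y := hy _ h1
  have h3 : w ≤ y + z := by
    calc w = w + 0 := (add_zero w).symm
    _ ≤ w + (z + p) := add_le_add_right hp w
    _ = (w + p) + z := by rw [add_assoc, add_comm z p]
    _ = y + z := by rw [h2]
  exact le_antisymm h3 hw
end

section
/- Let S be a positively directed ordered commutative monoid whose set of maximal elements S_max is nonempty. Then S_max, with the induced addition, is an abelian group whose neutral element e is the unique positive element of S_max; moreover, for z ∈ S_max and p ∈ S with z + p ≥ 0, the inverse of z in S_max is 2p + z. -/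
/-- In a positively directed ordered commutative monoid whose set of maximal elements is
nonempty, the maximal elements form an abelian group under the induced addition, whose
neutral element `e` is the unique positive element of `maxSet S`; for `z` maximal and
`p` with `z + p ≥ 0`, the inverse of `z` is `2p + z`. -/
theorem maxSet_is_abelian_group {S : Type*} [AddCommMonoid S] [PartialOrder S] [IsOrderedAddMonoid S]
    (hdir : ∀ x : S, ∃ p : S, 0 ≤ x + p)
    (hne : (maxSet S).Nonempty) :
    ∃ e ∈ maxSet S, 0 ≤ e ∧
      (∀ x ∈ maxSet S, 0 ≤ x → x = e) ∧
      (∀ x ∈ maxSet S, ∀ y ∈ maxSet S, x + y ∈ maxSet S) ∧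
      (∀ x ∈ maxSet S, x + e = x) ∧
      (∀ z ∈ maxSet S, ∀ p : S, 0 ≤ z + p →
        (p + p + z ∈ maxSet S ∧ z + (p + p + z) = e)) := by
  obtain ⟨m, hm⟩ := hne
  obtain ⟨p0, hp0⟩ := hdir m
  -- maximal elements absorb nonnegative elements
  have absorb : ∀ x ∈ maxSet S, ∀ c : S, 0 ≤ c → x + c = x := by
    intro x hx c hc
    exact hx _ (le_add_of_nonneg_right hc)
  -- if x is maximal and x + q ≥ 0 then x + q is maximal
  have hmax_add : ∀ x ∈ maxSet S, ∀ q : S, 0 ≤ x + q → x + q ∈ maxSet S := by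
    intro x hx q hq y hy
    have h1 : x + y = x := by
      refine hx _ ?_
      calc x = x + (x + q) := (absorb x hx _ hq).symm
        _ ≤ x + y := add_le_add_right hy x
    have h2 : y ≤ x + q := by
      calc y ≤ (x + q) + y := le_add_of_nonneg_left hq
        _ = (x + y) + q := by abel
        _ = x + q := by rw [h1]
    exact le_antisymm h2 hy
  set e := m + p0 with he_def
  have he0 : 0 ≤ e := hp0
  have he_max : e ∈ maxSet S := hmax_add m hm p0 hp0
  have hee : e + e = e := absorb e he_max e he0
  have huniq : ∀ x ∈ maxSet S, 0 ≤ x → x = e := by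
    intro x hx hx0
    have h1 : x + e = x := absorb x hx e he0
    have h2 : e + x = e := absorb e he_max x hx0
    rw [← h1, add_comm, h2]
  have hxp : ∀ x ∈ maxSet S, ∀ q : S, 0 ≤ x + q → x + q = e := by
    intro x hx q hq
    exact huniq _ (hmax_add x hx q hq) hq
  refine ⟨e, he_max, he0, huniq, ?_, fun x hx => absorb x hx e he0, ?_⟩
  · -- closure
    intro x hx y hy w hw
    obtain ⟨q, hq⟩ := hdir x
    have hxqe : x + q = e := hxp x hx q hq
    have hinv : x + (q + q + x) = e := by
      have h : x + (q + q + x) = (x + q) + (x + q) := by abel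
      rw [h, hxqe, hee]
    have hey : e + y = y := by rw [add_comm]; exact absorb y hy e he0
    have h1 : y ≤ (q + q + x) + w := by
      calc y = e + y := hey.symm
        _ = (x + (q + q + x)) + y := by rw [hinv]
        _ = (q + q + x) + (x + y) := by abel
        _ ≤ (q + q + x) + w := add_le_add_right hw _
    have h2 : (q + q + x) + w = y := hy _ h1
    have h3 : w ≤ x + y := by
      calc w ≤ e + w := le_add_of_nonneg_left he0
        _ = (e + e) + w := by rw [hee]
        _ = ((x + q) + (x + q)) + w := by rw [hxqe]
        _ = x + ((q + q + x) + w) := by abel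
        _ = x + y := by rw [h2]
    exact le_antisymm h3 hw
  · -- inverses
    intro z hz p hp
    have hzpe : z + p = e := hxp z hz p hp
    have hsum : z + (p + p + z) = e := by
      have h : z + (p + p + z) = (z + p) + (z + p) := by abel
      rw [h, hzpe, hee]
    refine ⟨?_, hsum⟩
    intro y hy
    have h1 : e ≤ z + y := by
      calc e = z + (p + p + z) := hsum.symm
        _ ≤ z + y := add_le_add_right hy z
    have h2 : z + y = e := he_max _ h1
    have h3 : y ≤ p + p + z := by
      calc y ≤ (z + p) + y := le_add_of_nonneg_left hp
        _ = p + (z + y) := by abel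
        _ = p + e := by rw [h2]
        _ = p + (z + p) := by rw [hzpe]
        _ = p + p + z := by abel
    exact le_antisymm h3 hy
end

section
/- Let S be a positively directed ordered commutative monoid with S_max nonempty, and let e denote the neutral element of the abelian group S_max. Then S_max is absorbing: for every x ∈ S and every m ∈ S_max, x + m ∈ S_max. -/
/-- In a positively directed ordered commutative monoid with nonempty set of maximal
elements, the maximal elements are absorbing: `x + m` is maximal for every `x ∈ S`
and every maximal `m`. -/
theorem maxSet_absorbing {S : Type*} [AddCommMonoid S] [PartialOrder S] [IsOrderedAddMonoid S]
    (hdir : ∀ x : S, ∃ p : S, 0 ≤ x + p)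
    (hne : (maxSet S).Nonempty) :
    ∀ x : S, ∀ m ∈ maxSet S, x + m ∈ maxSet S := by
  intro x m hm y hy
  obtain ⟨p, hp⟩ := hdir x
  have h1 : m ≤ x + m + p := by
    calc m = 0 + m := (zero_add m).symm
    _ ≤ (x + p) + m := add_le_add_left hp m
    _ = x + m + p := by abel
  have h2 : y + p = m := by
    apply hm
    calc m ≤ x + m + p := h1
    _ ≤ y + p := add_le_add_left hy p
  have h3 : y ≤ x + m := by
    calc y = y + 0 := (add_zero y).symm
    _ ≤ y + (x + p) := add_le_add_right hp y
    _ = (y + p) + x := by abel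
    _ = m + x := by rw [h2]
    _ = x + m := add_comm m x
  exact le_antisymm h3 hy
end

section
/- Let S, T be positively directed ordered commutative monoids with nonempty sets of maximal elements S_max, T_max, and let α : S → T be an additive, order-preserving map. Then the map α_max : S_max → T_max defined by α_max(s) = α(s) + e_{T_max} (where e_{T_max} is the neutral element of the group T_max) is a well-defined group homomorphism. -/
/-- Let `S`, `T` be positively directed ordered commutative monoids with nonempty sets of
maximal elements, and `α : S → T` an additive order-preserving map.  Then the map
`s ↦ α s + e`, where `e` is the neutral element of the group `T_max` (its unique positive
element), is a well-defined group homomorphism `S_max → T_max`: it takes values in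
`T_max` and is additive. -/
theorem maxSet_map_is_group_hom {S T : Type*} [AddCommMonoid S] [PartialOrder S]
    [IsOrderedAddMonoid S]
    [AddCommMonoid T] [PartialOrder T] [IsOrderedAddMonoid T]
    (hdirS : ∀ x : S, ∃ p : S, 0 ≤ x + p)
    (hdirT : ∀ x : T, ∃ p : T, 0 ≤ x + p)
    (hneS : (maxSet S).Nonempty) (hneT : (maxSet T).Nonempty)
    (α : S → T) (hadd : ∀ x y : S, α (x + y) = α x + α y) (hzero : α 0 = 0)
    (hmono : Monotone α)
    (e : T) (he : e ∈ maxSet T) (hepos : 0 ≤ e) :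
    (∀ s ∈ maxSet S, α s + e ∈ maxSet T) ∧
    (∀ s₁ ∈ maxSet S, ∀ s₂ ∈ maxSet S,
      α (s₁ + s₂) + e = (α s₁ + e) + (α s₂ + e)) := by
  -- `e` is idempotent: `e ≤ e + e` and `e` is maximal.
  have hee : e + e = e := he (e + e) (by simpa using add_le_add_left hepos e)
  constructor
  · intro s hs y hy
    -- directedness in `S`: get `q` with `0 ≤ s + q`
    obtain ⟨q, hq⟩ := hdirS s
    -- maximality of `s`: `s + (s + q) = s`
    have hs' : s + (s + q) = s := hs (s + (s + q)) (le_add_of_nonneg_right hq)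
    set u : T := α s + α q with hu
    have hu0 : 0 ≤ u := by
      have := hmono hq
      rwa [hzero, hadd] at this
    have hsu : α s + u = α s := by
      have := congrArg α hs'
      rw [hadd, hadd] at this
      simpa [hu, add_assoc] using this
    have hue : u + e = e := he (u + e) (le_add_of_nonneg_left hu0)
    -- `y + (α q + e) ≥ e`, hence equals `e` by maximality of `e`
    have hye : y + (α q + e) = e := by
      apply he
      calc e = u + e := hue.symm
        _ = α s + α q + (e + e) := by rw [hu, hee]
        _ = (α s + e) + (α q + e) := by abel
        _ ≤ y + (α q + e) := add_le_add_left hy _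
    have hkey : α s + e = y + e := by
      calc α s + e = α s + (y + (α q + e)) := by rw [hye]
        _ = y + (u + e) := by rw [hu]; abel
        _ = y + e := by rw [hue]
    exact le_antisymm (hkey ▸ le_add_of_nonneg_right hepos) hy
  · intro s₁ _ s₂ _
    rw [hadd]
    calc α s₁ + α s₂ + e = α s₁ + α s₂ + (e + e) := by rw [hee]
      _ = (α s₁ + e) + (α s₂ + e) := by abel
end
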